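/- Let x and y be bit-vectors of width 2w, each partitioned into two blocks of width w: x = x₂ ++ x₁ and y = y₂ ++ y₁ (with x₁, y₁ the low blocks). Then the zero-extended product of x and y to width 4w equals the sum of the four suitably shifted zero-extended partial products: [x*y] = zeroExt(x₁*y₁) + (zeroExt(x₂*y₁) <<< w) + (zeroExt(x₁*y₂) <<< w) + (zeroExt(x₂*y₂) <<< 2w), where each partial product xᵢ*yⱼ is computed as the width-2w product of the zero-extensions of xᵢ and yⱼ, and all terms are zero-extended to width 4w before shifting and adding. -/

import Mathlib

/-- Correctness of the long-multiplication decomposition into two blocks: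
the product of `x = x₂ ++ x₁` and `y = y₂ ++ y₁` (zero-extended to width
`4w`) is the sum of the four suitably shifted zero-extended exact partial
products, each computed at width `2w`. -/
theorem long_mult_two_blocks (w : ℕ) (x₁ x₂ y₁ y₂ : BitVec w) :
    BitVec.zeroExtend (4 * w) (x₂ ++ x₁) * BitVec.zeroExtend (4 * w) (y₂ ++ y₁) =
      BitVec.zeroExtend (4 * w)
          (BitVec.zeroExtend (2 * w) x₁ * BitVec.zeroExtend (2 * w) y₁)
      + (BitVec.zeroExtend (4 * w)
          (BitVec.zeroExtend (2 * w) x₂ * BitVec.zeroExtend (2 * w) y₁)) <<< w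
      + (BitVec.zeroExtend (4 * w)
          (BitVec.zeroExtend (2 * w) x₁ * BitVec.zeroExtend (2 * w) y₂)) <<< w
      + (BitVec.zeroExtend (4 * w)
          (BitVec.zeroExtend (2 * w) x₂ * BitVec.zeroExtend (2 * w) y₂)) <<< (2 * w) := by
  apply BitVec.eq_of_toNat_eq
  simp [BitVec.toNat_mul, BitVec.toNat_append, BitVec.toNat_shiftLeft, Nat.shiftLeft_eq]
  have h2w : ∀ a b : BitVec w, a.toNat * b.toNat < 2 ^ (2 * w) := by
    intro a b
    calc a.toNat * b.toNat < 2 ^ w * 2 ^ w := Nat.mul_lt_mul'' a.isLt b.isLt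
    _ = 2 ^ (2 * w) := by rw [← pow_add, two_mul]
  have hor : ∀ a b : BitVec w, (a.toNat * 2 ^ w ||| b.toNat) = a.toNat * 2 ^ w + b.toNat := by
    intro a b
    rw [mul_comm, ← Nat.two_pow_add_eq_or_of_lt b.isLt]
  rw [hor, hor, Nat.mod_eq_of_lt (h2w x₁ y₁), Nat.mod_eq_of_lt (h2w x₂ y₁),
    Nat.mod_eq_of_lt (h2w x₁ y₂), Nat.mod_eq_of_lt (h2w x₂ y₂)]
  congr 1
  have : (2 : ℕ) ^ (2 * w) = 2 ^ w * 2 ^ w := by rw [← pow_add, two_mul]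
  rw [this]; ring
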